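/- For every integer n ≥ 0, the evaluation of the ternary numerator at x = 1 satisfies num_T(n,1) = Σ_{λ ternary partition of n} 2^{n − ℓ(λ)}, where ℓ(λ) denotes the number of parts of λ (with the empty partition giving the value 1 for n = 0). -/

import Mathlib

open Polynomial Finset
open scoped Classical

/-- The ternary partitions of `n`: partitions of `n` all of whose parts are powers of `3`. -/
noncomputable def terParts (n : ℕ) : Finset (Nat.Partition n) :=
  Finset.univ.filter (fun μ => ∀ i ∈ μ.parts, ∃ k : ℕ, i = 3 ^ k)

/-- `h_{T,λ}(x) = ∏_{k ≥ 0, 3^k ≤ n} (1+x^{3^k})^(⌊n/3^k⌋ - m_λ(3^k))` in `ℤ[x]`. -/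
noncomputable def hT (n : ℕ) (μ : Nat.Partition n) : Polynomial ℤ :=
  ∏ k ∈ (Finset.range (n + 1)).filter (fun k => 3 ^ k ≤ n),
    (1 + X ^ (3 ^ k)) ^ (n / 3 ^ k - μ.parts.count (3 ^ k))

/-- `G_T(n,x)`: the (normalized) gcd of the `h_{T,λ}(x)` over ternary partitions `λ` of `n`. -/
noncomputable def GT (n : ℕ) : Polynomial ℤ :=
  (terParts n).gcd (hT n)

theorem GT_dvd_sum (n : ℕ) :
    ∃ q : Polynomial ℤ, (∑ μ ∈ terParts n, hT n μ) = GT n * q :=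
  exists_eq_mul_right_of_dvd (Finset.dvd_sum fun _ hμ => Finset.gcd_dvd hμ)

/-- `num_T(n,x) = (∑_{λ ternary partition of n} h_{T,λ}(x)) / G_T(n,x)`. -/
noncomputable def numT (n : ℕ) : Polynomial ℤ :=
  (GT_dvd_sum n).choose

namespace TerProof

/-- The index set `K n`. -/
noncomputable def Kf (n : ℕ) : Finset ℕ := (Finset.range (n + 1)).filter (fun k => 3 ^ k ≤ n)

/-- `S n = ∑_{3^k ≤ n} ⌊n/3^k⌋`. -/
noncomputable def Sf (n : ℕ) : ℕ := ∑ k ∈ Kf n, n / 3 ^ k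

lemma count_le_div (n : ℕ) (μ : Nat.Partition n) (a : ℕ) (ha : 0 < a) :
    μ.parts.count a ≤ n / a := by
  have h1 : Multiset.replicate (μ.parts.count a) a ≤ μ.parts :=
    Multiset.le_count_iff_replicate_le.mp le_rfl
  obtain ⟨u, hu⟩ := Multiset.le_iff_exists_add.mp h1
  have h2 : (Multiset.replicate (μ.parts.count a) a).sum ≤ μ.parts.sum := by
    conv_rhs => rw [hu]
    rw [Multiset.sum_add]; exact Nat.le_add_right _ _
  rw [Multiset.sum_replicate, smul_eq_mul, μ.parts_sum] at h2
  exact (Nat.le_div_iff_mul_le ha).mpr h2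

lemma card_le (n : ℕ) (μ : Nat.Partition n) : Multiset.card μ.parts ≤ n := by
  have := Multiset.card_nsmul_le_sum (s := μ.parts) (a := 1)
    (fun x hx => μ.parts_pos hx)
  simpa [μ.parts_sum] using this

lemma sum_count (n : ℕ) (μ : Nat.Partition n) (hμ : μ ∈ terParts n) :
    ∑ k ∈ Kf n, μ.parts.count (3 ^ k) = Multiset.card μ.parts := by
  have hter : ∀ i ∈ μ.parts, ∃ k : ℕ, i = 3 ^ k := by
    simpa [terParts] using hμ
  have hsub : μ.parts.toFinset ⊆ (Kf n).image (fun k => 3 ^ k) := by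
    intro a ha
    rw [Multiset.mem_toFinset] at ha
    obtain ⟨k, rfl⟩ := hter a ha
    have hle : 3 ^ k ≤ n := by
      have := Multiset.single_le_sum (fun x _ => Nat.zero_le x) _ ha
      rwa [μ.parts_sum] at this
    have hk : k < n + 1 := by
      have : k < 3 ^ k := Nat.lt_pow_self (by norm_num)
      omega
    exact Finset.mem_image.mpr ⟨k, Finset.mem_filter.mpr ⟨Finset.mem_range.mpr hk, hle⟩, rfl⟩
  have himg : ∑ a ∈ (Kf n).image (fun k => 3 ^ k), μ.parts.count a
      = ∑ k ∈ Kf n, μ.parts.count (3 ^ k) :=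
    Finset.sum_image (fun a _ b _ h => Nat.pow_right_injective (by norm_num : 2 ≤ 3) h)
  calc ∑ k ∈ Kf n, μ.parts.count (3 ^ k)
      = ∑ a ∈ (Kf n).image (fun k => 3 ^ k), μ.parts.count a := himg.symm
    _ = ∑ a ∈ μ.parts.toFinset, μ.parts.count a :=
        (Finset.sum_subset hsub (fun a _ ha => by
          rwa [Multiset.count_eq_zero, ← Multiset.mem_toFinset])).symm
    _ = Multiset.card μ.parts := Multiset.toFinset_sum_count_eq _

lemma count_le_div' (n k : ℕ) (μ : Nat.Partition n) :
    μ.parts.count (3 ^ k) ≤ n / 3 ^ k :=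
  count_le_div n μ _ (Nat.pow_pos (by norm_num))

lemma eval_one_hT (n : ℕ) (μ : Nat.Partition n) (hμ : μ ∈ terParts n) :
    Polynomial.eval (1 : ℤ) (hT n μ) = 2 ^ (Sf n - Multiset.card μ.parts) := by
  have h1 : Polynomial.eval (1 : ℤ) (hT n μ) =
      2 ^ (∑ k ∈ Kf n, (n / 3 ^ k - μ.parts.count (3 ^ k))) := by
    rw [hT, eval_prod, ← Finset.prod_pow_eq_pow_sum]
    exact Finset.prod_congr rfl (fun k _ => by simp)
  rw [h1, Finset.sum_tsub_distrib _ (fun k _ => count_le_div' n k μ),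
    sum_count n μ hμ]
  rfl

lemma n_le_S (n : ℕ) : n ≤ Sf n := by
  rcases Nat.eq_zero_or_pos n with rfl | hn
  · simp [Sf, Kf]
  · have h0 : 0 ∈ Kf n := by
      simp only [Kf, Finset.mem_filter, Finset.mem_range]
      constructor <;> simp <;> omega
    calc n = n / 3 ^ 0 := by simp
    _ ≤ Sf n := Finset.single_le_sum (f := fun k => n / 3 ^ k) (fun k _ => Nat.zero_le _) h0

lemma onePlusX_dvd (k : ℕ) : (1 + X : Polynomial ℤ) ∣ 1 + X ^ (3 ^ k) := by
  have hodd : Odd ((3 : ℕ) ^ k) := Odd.pow ⟨1, by norm_num⟩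
  have hroot : IsRoot (1 + X ^ (3 ^ k) : Polynomial ℤ) (-1) := by
    simp [IsRoot, hodd.neg_one_pow]
  have hdvd := (dvd_iff_isRoot (p := (1 + X ^ (3 ^ k) : Polynomial ℤ)) (a := -1)).mpr hroot
  have heq : (X - C (-1) : Polynomial ℤ) = 1 + X := by
    rw [map_neg, C_1]; ring
  rwa [heq] at hdvd

lemma pow_dvd_hT (n : ℕ) (μ : Nat.Partition n) (hμ : μ ∈ terParts n) :
    (1 + X : Polynomial ℤ) ^ (Sf n - n) ∣ hT n μ := by
  have h1 : (1 + X : Polynomial ℤ) ^ (Sf n - Multiset.card μ.parts) ∣ hT n μ := by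
    rw [← sum_count n μ hμ, show Sf n = ∑ k ∈ Kf n, n / 3 ^ k from rfl,
      ← Finset.sum_tsub_distrib _ (fun k (_ : k ∈ Kf n) => count_le_div' n k μ),
      ← Finset.prod_pow_eq_pow_sum, hT]
    exact Finset.prod_dvd_prod_of_dvd _ _
      (fun k _ => pow_dvd_pow_of_dvd (onePlusX_dvd k) _)
  exact dvd_trans (pow_dvd_pow _ (by have := card_le n μ; omega)) h1

lemma pow_dvd_GT (n : ℕ) : (1 + X : Polynomial ℤ) ^ (Sf n - n) ∣ GT n :=
  Finset.dvd_gcd (fun μ hμ => pow_dvd_hT n μ hμ)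

/-- The all-ones partition. -/
noncomputable def lam1 (n : ℕ) : Nat.Partition n where
  parts := Multiset.replicate n 1
  parts_pos := fun {i} hi => by rw [Multiset.eq_of_mem_replicate hi]; norm_num
  parts_sum := by simp

lemma lam1_mem (n : ℕ) : lam1 n ∈ terParts n := by
  simp only [terParts, Finset.mem_filter, Finset.mem_univ, true_and]
  intro i hi
  exact ⟨0, by simpa using Multiset.eq_of_mem_replicate hi⟩

lemma eval_one_hT_lam1 (n : ℕ) :
    Polynomial.eval (1 : ℤ) (hT n (lam1 n)) = 2 ^ (Sf n - n) := by
  rw [eval_one_hT n _ (lam1_mem n)]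
  simp [lam1]

lemma GT_eval_one_dvd (n : ℕ) : Polynomial.eval (1 : ℤ) (GT n) ∣ 2 ^ (Sf n - n) := by
  obtain ⟨q, hq⟩ := Finset.gcd_dvd (lam1_mem n) (f := hT n)
  rw [← eval_one_hT_lam1 n, hq, eval_mul]
  exact Dvd.intro _ rfl

lemma dvd_GT_eval_one (n : ℕ) : (2 : ℤ) ^ (Sf n - n) ∣ Polynomial.eval (1 : ℤ) (GT n) := by
  obtain ⟨q, hq⟩ := pow_dvd_GT n
  rw [hq, eval_mul]
  apply Dvd.dvd.mul_right
  simp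

lemma GT_eval_abs (n : ℕ) : Polynomial.eval (1 : ℤ) (GT n) = 2 ^ (Sf n - n) ∨
    Polynomial.eval (1 : ℤ) (GT n) = -(2 ^ (Sf n - n)) := by
  have h := associated_of_dvd_dvd (dvd_GT_eval_one n) (GT_eval_one_dvd n)
  rcases Int.associated_iff.mp h with h | h
  · exact Or.inl h.symm
  · exact Or.inr (by omega)

lemma GT_ne_zero (n : ℕ) : GT n ≠ 0 := by
  intro h
  have h1 := GT_eval_one_dvd n
  rw [h] at h1
  simp only [eval_zero] at h1
  have h2 : (2 : ℤ) ^ (Sf n - n) ≠ 0 := by positivity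
  exact h2 (zero_dvd_iff.mp h1)

lemma GT_leadingCoeff_pos (n : ℕ) : 0 < (GT n).leadingCoeff := by
  have hnorm : normalize (GT n) = GT n := Finset.normalize_gcd
  have h : (GT n).leadingCoeff = normalize (GT n).leadingCoeff := by
    conv_lhs => rw [← hnorm, Polynomial.leadingCoeff_normalize]
  have hne : (GT n).leadingCoeff ≠ 0 := by
    simpa [Polynomial.leadingCoeff_eq_zero] using GT_ne_zero n
  rw [h, ← Int.abs_eq_normalize]
  exact abs_pos.mpr hne

lemma hT_lam1_pos_real (n : ℕ) (c : ℝ) (hc : 1 ≤ c) :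
    0 < Polynomial.eval c ((hT n (lam1 n)).map (Int.castRingHom ℝ)) := by
  rw [hT, Polynomial.map_prod, eval_prod]
  apply Finset.prod_pos
  intro k _
  have hc0 : (0 : ℝ) < c := lt_of_lt_of_le one_pos hc
  have hp : (0 : ℝ) < c ^ 3 ^ k := pow_pos hc0 _
  simp only [Polynomial.map_pow, Polynomial.map_add, Polynomial.map_one,
    Polynomial.map_X, eval_pow, eval_add, eval_one, eval_X]
  positivity

lemma GT_eval_one_pos (n : ℕ) : 0 < Polynomial.eval (1 : ℤ) (GT n) := by
  have h2pos : (0 : ℤ) < 2 ^ (Sf n - n) := by positivity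
  rcases GT_eval_abs n with h | h
  · rw [h]; exact h2pos
  exfalso
  set P : Polynomial ℝ := (GT n).map (Int.castRingHom ℝ) with hP
  have hP1 : P.eval 1 < 0 := by
    rw [hP, Polynomial.eval_one_map, h, eq_intCast]
    have h2 : (0 : ℝ) < (2 : ℝ) ^ (Sf n - n) := by positivity
    push_cast
    linarith
  have hdeg : P.degree = (GT n).degree :=
    Polynomial.degree_map_eq_of_injective Int.cast_injective _
  have hlc : P.leadingCoeff = ((GT n).leadingCoeff : ℝ) := by
    apply Polynomial.leadingCoeff_map_of_leadingCoeff_ne_zero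
    simp only [eq_intCast, ne_eq, Int.cast_eq_zero, Polynomial.leadingCoeff_eq_zero]
    exact GT_ne_zero n
  have hlcpos : 0 < P.leadingCoeff := by
    rw [hlc]; exact_mod_cast GT_leadingCoeff_pos n
  rcases le_or_gt (GT n).degree 0 with hd | hd
  · -- constant case: GT n = C a with a = leadingCoeff > 0, but eval 1 < 0
    obtain ⟨a, ha⟩ : ∃ a, GT n = C a := ⟨(GT n).coeff 0, Polynomial.eq_C_of_degree_le_zero hd⟩
    have h1 : Polynomial.eval (1 : ℤ) (GT n) = a := by rw [ha]; simp
    have h2 : (GT n).leadingCoeff = a := by rw [ha, Polynomial.leadingCoeff_C]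
    have := GT_leadingCoeff_pos n
    rw [h2] at this
    rw [h1] at h
    omega
  · have hdegP : 0 < P.degree := by rwa [hdeg]
    have htop : Filter.Tendsto (fun x => P.eval x) Filter.atTop Filter.atTop :=
      P.tendsto_atTop_of_leadingCoeff_nonneg hdegP hlcpos.le
    obtain ⟨x₀, hx₀⟩ := ((htop.eventually_ge_atTop 0).and (Filter.eventually_ge_atTop 1)).exists
    have hIcc : (0 : ℝ) ∈ Set.Icc (P.eval 1) (P.eval x₀) := ⟨hP1.le, hx₀.1⟩
    have hcont : ContinuousOn (fun x => P.eval x) (Set.Icc 1 x₀) :=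
      (Polynomial.continuous P).continuousOn
    obtain ⟨c, hcmem, hc0⟩ := intermediate_value_Icc hx₀.2 hcont hIcc
    obtain ⟨q, hq⟩ := Finset.gcd_dvd (lam1_mem n) (f := hT n)
    have hc0' : Polynomial.eval c (Polynomial.map (Int.castRingHom ℝ) (GT n)) = 0 := hc0
    have hzero : Polynomial.eval c ((hT n (lam1 n)).map (Int.castRingHom ℝ)) = 0 := by
      rw [hq, Polynomial.map_mul, eval_mul,
        show (terParts n).gcd (hT n) = GT n from rfl, hc0', zero_mul]
    exact (hT_lam1_pos_real n c hcmem.1).ne' hzero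

end TerProof

/-- For every integer `n ≥ 0`, the evaluation of the ternary numerator at `x = 1` satisfies
`num_T(n,1) = Σ_{λ ternary partition of n} 2^{n − ℓ(λ)}`, where `ℓ(λ)` is the number of
parts of `λ` (with the empty partition giving the value `1` for `n = 0`). -/
theorem numT_eval_one (n : ℕ) :
    Polynomial.eval (1 : ℤ) (numT n) =
      ∑ μ ∈ terParts n, (2 : ℤ) ^ (n - Multiset.card μ.parts) := by
  have hspec : (∑ μ ∈ terParts n, hT n μ) = GT n * numT n := (GT_dvd_sum n).choose_spec
  have hGT : Polynomial.eval (1 : ℤ) (GT n) = 2 ^ (TerProof.Sf n - n) := by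
    rcases TerProof.GT_eval_abs n with h | h
    · exact h
    · have := TerProof.GT_eval_one_pos n
      have h2 : (0 : ℤ) < 2 ^ (TerProof.Sf n - n) := by positivity
      omega
  have h1 : (2 : ℤ) ^ (TerProof.Sf n - n) *
      ∑ μ ∈ terParts n, (2 : ℤ) ^ (n - Multiset.card μ.parts)
      = (2 : ℤ) ^ (TerProof.Sf n - n) * Polynomial.eval 1 (numT n) := by
    have heval := congrArg (Polynomial.eval (1 : ℤ)) hspec
    rw [Polynomial.eval_finset_sum, eval_mul, hGT] at heval
    rw [Finset.mul_sum, ← heval]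
    refine Finset.sum_congr rfl (fun μ hμ => ?_)
    rw [TerProof.eval_one_hT n μ hμ, ← pow_add]
    congr 1
    have hc := TerProof.card_le n μ
    have hs := TerProof.n_le_S n
    omega
  exact (mul_left_cancel₀ (by positivity) h1).symm
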